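/- arXiv:2002.07095 — 9 statements merged into one kernel-verified Lean document; each statement's English description precedes it below -/
import Mathlib

section
/- Let b and ℓ be natural numbers with ℓ ≤ b. For all natural numbers x, y with x + y = ℓ and x ≤ y, one has C(b,x)·C(b,y) ≤ C(b,⌊ℓ/2⌋)·C(b,⌈ℓ/2⌉); that is, among all pairs (x,y) with x+y=ℓ and 0 ≤ x ≤ y, the product C(b,x)·C(b,y) is maximized at (x,y) = (⌊ℓ/2⌋,⌈ℓ/2⌉). Consequently, for fixed n, the quantity P(x,y) = C(b,x)·C(b,y)/C(n+1,ℓ) is maximized at the same pair. -/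
lemma step_lemma (b x y : ℕ) (hxy : x < y) (hyb : y ≤ b) :
    Nat.choose b x * Nat.choose b y ≤ Nat.choose b (x + 1) * Nat.choose b (y - 1) := by
  have hy : y - 1 + 1 = y := by omega
  have h1 : Nat.choose b (x + 1) * (x + 1) = Nat.choose b x * (b - x) :=
    Nat.choose_succ_right_eq b x
  have h2 : Nat.choose b y * y = Nat.choose b (y - 1) * (b - (y - 1)) := by
    conv_lhs => rw [← hy]
    rw [Nat.choose_succ_right_eq]
  have hmul : (b - (y - 1)) * (x + 1) ≤ (b - x) * y := by
    apply Nat.mul_le_mul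
    · omega
    · omega
  have key : (Nat.choose b x * Nat.choose b y) * ((x + 1) * y)
      ≤ (Nat.choose b (x + 1) * Nat.choose b (y - 1)) * ((x + 1) * y) := by
    calc (Nat.choose b x * Nat.choose b y) * ((x + 1) * y)
        = Nat.choose b x * ((Nat.choose b y * y) * (x + 1)) := by ring
      _ = Nat.choose b x * Nat.choose b (y - 1) * ((b - (y - 1)) * (x + 1)) := by
          rw [h2]; ring
      _ ≤ Nat.choose b x * Nat.choose b (y - 1) * ((b - x) * y) :=
          Nat.mul_le_mul_left _ hmul
      _ = (Nat.choose b x * (b - x)) * Nat.choose b (y - 1) * y := by ring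
      _ = (Nat.choose b (x + 1) * (x + 1)) * Nat.choose b (y - 1) * y := by rw [h1]
      _ = (Nat.choose b (x + 1) * Nat.choose b (y - 1)) * ((x + 1) * y) := by ring
  exact Nat.le_of_mul_le_mul_right key (Nat.mul_pos (Nat.succ_pos x) (by omega))

lemma main_lemma (b ℓ : ℕ) (hℓ : ℓ ≤ b) :
    ∀ x y : ℕ, x + y = ℓ → x ≤ y →
      Nat.choose b x * Nat.choose b y ≤
        Nat.choose b (ℓ / 2) * Nat.choose b ((ℓ + 1) / 2) := by
  intro x y hsum hle
  obtain ⟨d, hd⟩ : ∃ d, y - x = d := ⟨y - x, rfl⟩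
  induction d using Nat.strong_induction_on generalizing x y with
  | _ d ih =>
    rcases Nat.lt_or_ge x y with h | h
    · rcases Nat.eq_or_lt_of_le (Nat.succ_le_of_lt h) with heq | hlt
      · -- y = x + 1, ℓ odd
        have : ℓ / 2 = x ∧ (ℓ + 1) / 2 = y := by omega
        rw [this.1, this.2]
      · -- x + 1 ≤ y - 1
        have hstep := step_lemma b x y h (by omega)
        refine hstep.trans (ih (y - 1 - (x + 1)) (by omega) (x + 1) (y - 1)
          (by omega) (by omega) rfl)
    · have hxy : x = y := le_antisymm hle h
      have : ℓ / 2 = x ∧ (ℓ + 1) / 2 = y := by omega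
      rw [this.1, this.2]

theorem choose_mul_choose_max_at_half (b ℓ : ℕ) (hℓ : ℓ ≤ b) :
    (∀ x y : ℕ, x + y = ℓ → x ≤ y →
        Nat.choose b x * Nat.choose b y ≤
          Nat.choose b (ℓ / 2) * Nat.choose b ((ℓ + 1) / 2)) ∧
    (∀ n : ℕ, ∀ x y : ℕ, x + y = ℓ → x ≤ y →
        (Nat.choose b x * Nat.choose b y : ℚ) / (Nat.choose (n + 1) ℓ : ℚ) ≤
          (Nat.choose b (ℓ / 2) * Nat.choose b ((ℓ + 1) / 2) : ℚ) /
            (Nat.choose (n + 1) ℓ : ℚ)) := by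
  refine ⟨main_lemma b ℓ hℓ, fun n x y hsum hle => ?_⟩
  have h := main_lemma b ℓ hℓ x y hsum hle
  rcases Nat.eq_zero_or_pos (Nat.choose (n + 1) ℓ) with h0 | hpos
  · simp [h0]
  · have hc : (0:ℚ) < (Nat.choose (n + 1) ℓ : ℚ) := by exact_mod_cast hpos
    apply div_le_div_of_nonneg_right ?_ hc.le
    exact_mod_cast h
end

section
/- Let N, b, h₁, h₂ be natural numbers with h₁ ≤ b, h₂ ≤ b and 2b ≤ N, and set ℓ = h₁ + h₂. Fix a subset J of a set of size N with |J| = ℓ. Let Ω be the set of ordered pairs (I₁, I₂) of disjoint subsets of the N-element set with |I₁| = |I₂| = b, and let F be the set of pairs (I₁,I₂) ∈ Ω such that |J ∩ I₁| = h₁ and |J ∩ I₂| = h₂. Then |F| · C(N,ℓ) = C(b,h₁) · C(b,h₂) · |Ω|. (Equivalently, the probability that a uniformly random pair of disjoint b-subsets splits the fixed ℓ-set J as (h₁,h₂) equals C(b,h₁)C(b,h₂)/C(N,ℓ).) -/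
open Finset

lemma count_sub (S J : Finset ℕ) (b h : ℕ) (hb : h ≤ b) :
    ((S.powerset.filter (fun I => I.card = b ∧ (J ∩ I).card = h))).card
      = ((S ∩ J).card.choose h) * ((S \ J).card.choose (b - h)) := by
  rw [← Finset.card_powersetCard, ← Finset.card_powersetCard, ← Finset.card_product]
  apply Finset.card_bij' (fun I _ => (I ∩ J, I \ J)) (fun P _ => P.1 ∪ P.2)
  · intro I hI
    simp only [mem_filter, mem_powerset] at hI
    obtain ⟨hIS, hIb, hIJ⟩ := hI
    have h1 : (I ∩ J).card = h := by rwa [inter_comm] at hIJ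
    have h2 : (I ∩ J).card + (I \ J).card = I.card := card_inter_add_card_sdiff I J
    simp only [mem_product, mem_powersetCard]
    refine ⟨⟨inter_subset_inter hIS (subset_refl J), h1⟩,
      ⟨sdiff_subset_sdiff hIS (subset_refl J), by omega⟩⟩
  · intro P hP
    simp only [mem_product, mem_powersetCard] at hP
    obtain ⟨⟨hA, hAc⟩, ⟨hB, hBc⟩⟩ := hP
    have hAJ : P.1 ⊆ J := hA.trans inter_subset_right
    have hBJ : Disjoint P.2 J := (subset_sdiff.mp (hB.trans (subset_refl _))).2 |>.mono_left (subset_refl _)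
    have hABdisj : Disjoint P.1 P.2 := (hBJ.symm).mono_left hAJ
    simp only [mem_filter, mem_powerset]
    refine ⟨union_subset (hA.trans inter_subset_left) (hB.trans sdiff_subset), ?_, ?_⟩
    · rw [card_union_of_disjoint hABdisj, hAc, hBc]; omega
    · rw [inter_union_distrib_left, inter_eq_right.mpr hAJ,
        (disjoint_iff_inter_eq_empty.mp hBJ.symm), union_empty, hAc]
  · intro I hI
    ext x
    simp only [mem_union, mem_inter, mem_sdiff]
    tauto
  · intro P hP
    simp only [mem_product, mem_powersetCard] at hP
    obtain ⟨⟨hA, hAc⟩, ⟨hB, hBc⟩⟩ := hP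
    have hAJ : P.1 ⊆ J := hA.trans inter_subset_right
    have hBJ : Disjoint P.2 J := (subset_sdiff.mp hB).2
    have e1 : (P.1 ∪ P.2) ∩ J = P.1 := by
      rw [union_inter_distrib_right, inter_eq_left.mpr hAJ,
        disjoint_iff_inter_eq_empty.mp hBJ, union_empty]
    have e2 : (P.1 ∪ P.2) \ J = P.2 := by
      rw [union_sdiff_distrib, sdiff_eq_empty_iff_subset.mpr hAJ,
        hBJ.sdiff_eq_left, empty_union]
    rw [e1, e2]

lemma inner_eq' (N : ℕ) (I₁ : Finset ℕ) (p : Finset ℕ → Prop) [DecidablePred p] :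
    ((Finset.range N).powerset.filter (fun I₂ => Disjoint I₁ I₂ ∧ p I₂))
      = ((Finset.range N \ I₁).powerset.filter p) := by
  ext I₂
  simp only [mem_filter, mem_powerset, subset_sdiff]
  constructor
  · rintro ⟨h1, h2, h3⟩; exact ⟨⟨h1, h2.symm⟩, h3⟩
  · rintro ⟨⟨h1, h2⟩, h3⟩; exact ⟨h1, h2.symm, h3⟩

open Finset in
theorem split_probability_hypergeometric
    (N b h₁ h₂ : ℕ) (hh₁ : h₁ ≤ b) (hh₂ : h₂ ≤ b) (hbN : 2 * b ≤ N)
    (J : Finset ℕ) (hJ : J ⊆ Finset.range N) (hJcard : J.card = h₁ + h₂) :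
    ((((Finset.range N).powerset ×ˢ (Finset.range N).powerset).filter
        (fun P : Finset ℕ × Finset ℕ =>
          Disjoint P.1 P.2 ∧ P.1.card = b ∧ P.2.card = b ∧
            (J ∩ P.1).card = h₁ ∧ (J ∩ P.2).card = h₂)).card *
      Nat.choose N (h₁ + h₂)) =
    Nat.choose b h₁ * Nat.choose b h₂ *
      (((Finset.range N).powerset ×ˢ (Finset.range N).powerset).filter
        (fun P : Finset ℕ × Finset ℕ =>
          Disjoint P.1 P.2 ∧ P.1.card = b ∧ P.2.card = b)).card := by
  have hFcard :
      ((((Finset.range N).powerset ×ˢ (Finset.range N).powerset).filter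
        (fun P : Finset ℕ × Finset ℕ =>
          Disjoint P.1 P.2 ∧ P.1.card = b ∧ P.2.card = b ∧
            (J ∩ P.1).card = h₁ ∧ (J ∩ P.2).card = h₂)).card)
      = Nat.choose (h₁ + h₂) h₁ * Nat.choose (N - (h₁ + h₂)) (b - h₁) *
        Nat.choose (N - b - h₂) (b - h₂) := by
    rw [Finset.card_filter, Finset.sum_product]
    have step : ∀ I₁ ∈ (Finset.range N).powerset,
        (∑ I₂ ∈ (Finset.range N).powerset,
          if (Disjoint I₁ I₂ ∧ I₁.card = b ∧ I₂.card = b ∧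
              (J ∩ I₁).card = h₁ ∧ (J ∩ I₂).card = h₂) then 1 else 0)
        = if (I₁.card = b ∧ (J ∩ I₁).card = h₁) then
            Nat.choose (N - b - h₂) (b - h₂) else 0 := by
      intro I₁ hI₁
      have hI₁sub : I₁ ⊆ Finset.range N := mem_powerset.mp hI₁
      by_cases hc : I₁.card = b ∧ (J ∩ I₁).card = h₁
      · rw [if_pos hc]
        have hsum : (∑ I₂ ∈ (Finset.range N).powerset,
            if (Disjoint I₁ I₂ ∧ I₁.card = b ∧ I₂.card = b ∧
                (J ∩ I₁).card = h₁ ∧ (J ∩ I₂).card = h₂) then 1 else 0)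
            = ((Finset.range N).powerset.filter
                (fun I₂ => Disjoint I₁ I₂ ∧ (I₂.card = b ∧ (J ∩ I₂).card = h₂))).card := by
          rw [Finset.card_filter]
          refine Finset.sum_congr rfl fun I₂ _ => ?_
          refine if_congr ?_ rfl rfl
          constructor <;> intro h <;> tauto
        rw [hsum, inner_eq' N I₁ _, count_sub _ _ _ _ hh₂]
        have h1 : (Finset.range N \ I₁) ∩ J = J \ I₁ := by
          ext x
          simp only [mem_inter, mem_sdiff]
          constructor
          · rintro ⟨⟨hr, hni⟩, hj⟩; exact ⟨hj, hni⟩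
          · rintro ⟨hj, hni⟩; exact ⟨⟨hJ hj, hni⟩, hj⟩
        have h1c : ((Finset.range N \ I₁) ∩ J).card = h₂ := by
          rw [h1]
          have := card_inter_add_card_sdiff J I₁
          omega
        have h2 : (Finset.range N \ I₁) \ J = Finset.range N \ (I₁ ∪ J) := by
          ext x; simp only [mem_sdiff, mem_union]; tauto
        have h2c : ((Finset.range N \ I₁) \ J).card = N - b - h₂ := by
          rw [h2, card_sdiff_of_subset (union_subset hI₁sub hJ), card_range]
          have hu := card_union_add_card_inter I₁ J
          have hi : (I₁ ∩ J).card = h₁ := by rw [inter_comm]; exact hc.2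
          omega
        rw [h1c, h2c, Nat.choose_self, one_mul]
      · rw [if_neg hc]
        apply Finset.sum_eq_zero
        intro I₂ _
        rw [if_neg]
        tauto
    rw [Finset.sum_congr rfl step, ← Finset.sum_filter, Finset.sum_const, smul_eq_mul,
      count_sub _ _ _ _ hh₁, inter_eq_right.mpr hJ, hJcard,
      card_sdiff_of_subset hJ, card_range, hJcard]
  have hΩcard :
      ((((Finset.range N).powerset ×ˢ (Finset.range N).powerset).filter
        (fun P : Finset ℕ × Finset ℕ =>
          Disjoint P.1 P.2 ∧ P.1.card = b ∧ P.2.card = b)).card)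
      = Nat.choose N b * Nat.choose (N - b) b := by
    rw [Finset.card_filter, Finset.sum_product]
    have step : ∀ I₁ ∈ (Finset.range N).powerset,
        (∑ I₂ ∈ (Finset.range N).powerset,
          if (Disjoint I₁ I₂ ∧ I₁.card = b ∧ I₂.card = b) then 1 else 0)
        = if I₁.card = b then Nat.choose (N - b) b else 0 := by
      intro I₁ hI₁
      have hI₁sub : I₁ ⊆ Finset.range N := mem_powerset.mp hI₁
      by_cases hc : I₁.card = b
      · rw [if_pos hc]
        have hsum : (∑ I₂ ∈ (Finset.range N).powerset,
            if (Disjoint I₁ I₂ ∧ I₁.card = b ∧ I₂.card = b) then 1 else 0)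
            = ((Finset.range N).powerset.filter
                (fun I₂ => Disjoint I₁ I₂ ∧ I₂.card = b)).card := by
          rw [Finset.card_filter]
          refine Finset.sum_congr rfl fun I₂ _ => ?_
          refine if_congr ?_ rfl rfl
          constructor <;> intro h <;> tauto
        rw [hsum, inner_eq' N I₁ _, ← Finset.powersetCard_eq_filter,
          Finset.card_powersetCard, card_sdiff_of_subset hI₁sub, card_range, hc]
      · rw [if_neg hc]
        apply Finset.sum_eq_zero
        intro I₂ _
        rw [if_neg]
        tauto
    rw [Finset.sum_congr rfl step, ← Finset.sum_filter, Finset.sum_const, smul_eq_mul,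
      ← Finset.powersetCard_eq_filter, Finset.card_powersetCard, card_range]
  rw [hFcard, hΩcard]
  -- arithmetic identity
  set ℓ := h₁ + h₂ with hℓ
  have hM : 0 < h₁.factorial * h₂.factorial * (b - h₁).factorial * (b - h₂).factorial *
      (N - 2 * b).factorial := by positivity
  apply Nat.eq_of_mul_eq_mul_right hM
  have e1 : Nat.choose ℓ h₁ * h₁.factorial * h₂.factorial = ℓ.factorial := by
    have := Nat.choose_mul_factorial_mul_factorial (show h₁ ≤ ℓ by omega)
    rwa [show ℓ - h₁ = h₂ by omega] at this
  have e2 : Nat.choose (N - ℓ) (b - h₁) * (b - h₁).factorial * (N - b - h₂).factorial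
      = (N - ℓ).factorial := by
    have := Nat.choose_mul_factorial_mul_factorial (show b - h₁ ≤ N - ℓ by omega)
    rwa [show (N - ℓ) - (b - h₁) = N - b - h₂ by omega] at this
  have e3 : Nat.choose (N - b - h₂) (b - h₂) * (b - h₂).factorial * (N - 2 * b).factorial
      = (N - b - h₂).factorial := by
    have := Nat.choose_mul_factorial_mul_factorial (show b - h₂ ≤ N - b - h₂ by omega)
    rwa [show (N - b - h₂) - (b - h₂) = N - 2 * b by omega] at this
  have e4 : Nat.choose N ℓ * ℓ.factorial * (N - ℓ).factorial = N.factorial :=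
    Nat.choose_mul_factorial_mul_factorial (by omega)
  have g1 : Nat.choose b h₁ * h₁.factorial * (b - h₁).factorial = b.factorial :=
    Nat.choose_mul_factorial_mul_factorial hh₁
  have g2 : Nat.choose b h₂ * h₂.factorial * (b - h₂).factorial = b.factorial :=
    Nat.choose_mul_factorial_mul_factorial hh₂
  have g3 : Nat.choose N b * b.factorial * (N - b).factorial = N.factorial :=
    Nat.choose_mul_factorial_mul_factorial (by omega)
  have g4 : Nat.choose (N - b) b * b.factorial * (N - 2 * b).factorial = (N - b).factorial := by
    have := Nat.choose_mul_factorial_mul_factorial (show b ≤ N - b by omega)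
    rwa [show (N - b) - b = N - 2 * b by omega] at this
  calc Nat.choose ℓ h₁ * Nat.choose (N - ℓ) (b - h₁) * Nat.choose (N - b - h₂) (b - h₂) *
        Nat.choose N ℓ *
        (h₁.factorial * h₂.factorial * (b - h₁).factorial * (b - h₂).factorial *
          (N - 2 * b).factorial)
      = Nat.choose N ℓ * (Nat.choose ℓ h₁ * h₁.factorial * h₂.factorial) *
        (Nat.choose (N - ℓ) (b - h₁) * (b - h₁).factorial *
          (Nat.choose (N - b - h₂) (b - h₂) * (b - h₂).factorial * (N - 2 * b).factorial)) := by
        ring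
    _ = Nat.choose N ℓ * ℓ.factorial *
        (Nat.choose (N - ℓ) (b - h₁) * (b - h₁).factorial * (N - b - h₂).factorial) := by
        rw [e1, e3]
    _ = Nat.choose N ℓ * ℓ.factorial * (N - ℓ).factorial := by rw [e2]
    _ = N.factorial := e4
    _ = Nat.choose N b * b.factorial * (N - b).factorial := g3.symm
    _ = Nat.choose N b * b.factorial * (Nat.choose (N - b) b * b.factorial *
          (N - 2 * b).factorial) := by rw [g4]
    _ = Nat.choose N b * (Nat.choose b h₁ * h₁.factorial * (b - h₁).factorial) *
        (Nat.choose (N - b) b * (Nat.choose b h₂ * h₂.factorial * (b - h₂).factorial) *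
          (N - 2 * b).factorial) := by rw [g1, g2]
    _ = Nat.choose b h₁ * Nat.choose b h₂ * (Nat.choose N b * Nat.choose (N - b) b) *
        (h₁.factorial * h₂.factorial * (b - h₁).factorial * (b - h₂).factorial *
          (N - 2 * b).factorial) := by ring
end

section
/- (Korselt's criterion) Let n be a composite natural number (n ≥ 2 and n is not prime). Then n is a Carmichael number, i.e. a^(n−1) ≡ 1 (mod n) for every integer a coprime to n, if and only if n is squarefree and for every prime p dividing n one has (p−1) ∣ (n−1). -/
/-- If `x ^ 2 = 0` in a commutative ring, then `(1 + x) ^ m = 1 + m * x`. -/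
lemma korselt_aux_pow {R : Type*} [CommRing R] (x : R) (hx : x ^ 2 = 0) (m : ℕ) :
    (1 + x) ^ m = 1 + (m : R) * x := by
  induction m with
  | zero => simp
  | succ k ih =>
    rw [pow_succ, ih]
    push_cast
    ring_nf
    linear_combination (k : R) * hx

/-- CRT lifting: for a prime `p ∣ n` and `b` coprime to `p`, there is `a ≡ b [MOD p ^ v_p(n)]`
which is coprime to `n`. -/
lemma korselt_aux_lift (n p b : ℕ) (hn : n ≠ 0) (hp : p.Prime) (hpn : p ∣ n)
    (hb : Nat.Coprime b p) :
    ∃ a : ℕ, a ≡ b [MOD p ^ n.factorization p] ∧ Nat.Coprime a n := by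
  set k := n.factorization p with hk
  set m := n / p ^ k with hm
  have hco : Nat.Coprime (p ^ k) m := Nat.coprime_ordCompl hp hn |>.pow_left _
  obtain ⟨a, ha1, ha2⟩ := Nat.chineseRemainder hco b 1
  refine ⟨a, ha1, ?_⟩
  have hnmul : p ^ k * m = n := Nat.ordProj_mul_ordCompl_eq_self n p
  have hap : Nat.Coprime a p := by
    have h1 : a ≡ b [MOD p] := ha1.of_dvd (dvd_pow_self p (Nat.Prime.factorization_pos_of_dvd hp hn hpn).ne')
    have : (a : ZMod p) = (b : ZMod p) := (ZMod.natCast_eq_natCast_iff _ _ _).mpr h1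
    have : IsUnit (a : ZMod p) := by
      rw [this, ZMod.isUnit_iff_coprime]; exact hb
    exact (ZMod.isUnit_iff_coprime a p).mp this
  have ham : Nat.Coprime a m := by
    have : (a : ZMod m) = (1 : ℕ) := (ZMod.natCast_eq_natCast_iff _ _ _).mpr ha2
    have : IsUnit (a : ZMod m) := by rw [this]; simp
    exact (ZMod.isUnit_iff_coprime a m).mp this
  rw [← hnmul]
  exact Nat.Coprime.mul_right (hap.pow_right _) ham

theorem korselt_criterion (n : ℕ) (hn : 2 ≤ n) (hcomp : ¬ n.Prime) :
    (∀ a : ℤ, IsCoprime a (n : ℤ) → a ^ (n - 1) ≡ 1 [ZMOD (n : ℤ)]) ↔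
      (Squarefree n ∧ ∀ p : ℕ, p.Prime → p ∣ n → (p - 1) ∣ (n - 1)) := by
  have hn0 : n ≠ 0 := by omega
  constructor
  · intro h
    constructor
    · -- squarefree
      rw [Nat.squarefree_iff_prime_squarefree]
      intro p hp hsq
      have hpn : p ∣ n := (dvd_mul_right p p).trans hsq
      have hk2 : 2 ≤ n.factorization p := by
        rw [← hp.pow_dvd_iff_le_factorization hn0]
        simpa [pow_two] using hsq
      obtain ⟨a, ha1, ha2⟩ := korselt_aux_lift n p (1 + p) hn0 hp hpn
        (by simpa [Nat.add_comm] using Nat.coprime_succ_self_left (n := p))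
      have hmod := h a ((Nat.isCoprime_iff_coprime).mpr ha2)
      -- reduce mod p^2
      have hp2n : ((p : ℤ) ^ 2) ∣ (n : ℤ) := by
        exact_mod_cast Int.natCast_dvd_natCast.mpr (by simpa [pow_two] using hsq)
      have hmod2 : (a : ℤ) ^ (n - 1) ≡ 1 [ZMOD ((p ^ 2 : ℕ) : ℤ)] := by
        refine Int.ModEq.of_dvd ?_ hmod
        exact_mod_cast hp2n
      have hcast : ((a : ℕ) : ZMod (p ^ 2)) ^ (n - 1) = 1 := by
        have := (ZMod.intCast_eq_intCast_iff _ _ _).mpr hmod2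
        exact_mod_cast this
      have haval : ((a : ℕ) : ZMod (p ^ 2)) = 1 + (p : ZMod (p ^ 2)) := by
        have hdvd : p ^ 2 ∣ p ^ n.factorization p := pow_dvd_pow p hk2
        have := (ZMod.natCast_eq_natCast_iff _ _ _).mpr (ha1.of_dvd hdvd)
        rw [this]; push_cast; ring
      have hx : ((p : ZMod (p ^ 2))) ^ 2 = 0 := by
        have : ((p ^ 2 : ℕ) : ZMod (p ^ 2)) = 0 := ZMod.natCast_self _
        push_cast at this
        exact this
      have hfin : (1 + (p : ZMod (p ^ 2))) ^ (n - 1) = 1 := by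
        rw [← haval]
        exact hcast
      rw [korselt_aux_pow _ hx] at hfin
      have heq0 : (((n - 1) * p : ℕ) : ZMod (p ^ 2)) = 0 := by
        push_cast
        linear_combination hfin
      rw [ZMod.natCast_eq_zero_iff] at heq0
      have hpd : p ∣ n - 1 := by
        have : p * p ∣ (n - 1) * p := by simpa [pow_two] using heq0
        rw [mul_comm p p] at this
        exact (mul_dvd_mul_iff_right (a := p) (by exact_mod_cast hp.pos.ne')).mp
          (by simpa [mul_comm] using this)
      have : p ∣ 1 := by
        have := Nat.dvd_sub hpn hpd
        simpa [Nat.sub_sub_self (by omega : 1 ≤ n)] using this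
      exact hp.one_lt.ne' (Nat.dvd_one.mp this)
    · -- divisibility
      intro p hp hpn
      haveI : Fact p.Prime := ⟨hp⟩
      obtain ⟨g, hg⟩ := IsCyclic.exists_generator (α := (ZMod p)ˣ)
      have hord : orderOf g = p - 1 := by
        rw [orderOf_eq_card_of_forall_mem_zpowers hg, Nat.card_eq_fintype_card,
          ZMod.card_units_eq_totient, Nat.totient_prime hp]
      have hbp : Nat.Coprime (g : ZMod p).val p := by
        have : IsUnit (((g : ZMod p).val : ℕ) : ZMod p) := by
          rw [ZMod.natCast_val, ZMod.cast_id]; exact g.isUnit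
        exact (ZMod.isUnit_iff_coprime _ p).mp this
      obtain ⟨a, ha1, ha2⟩ := korselt_aux_lift n p (g : ZMod p).val hn0 hp hpn hbp
      have hmod := h a ((Nat.isCoprime_iff_coprime).mpr ha2)
      have hmodp : (a : ℤ) ^ (n - 1) ≡ 1 [ZMOD (p : ℤ)] :=
        Int.ModEq.of_dvd (Int.natCast_dvd_natCast.mpr hpn) hmod
      have hcast : ((a : ℕ) : ZMod p) ^ (n - 1) = 1 := by
        have := (ZMod.intCast_eq_intCast_iff _ _ _).mpr hmodp
        push_cast at this
        exact this
      have hgp : ((a : ℕ) : ZMod p) = (g : ZMod p) := by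
        have hdvd : p ∣ p ^ n.factorization p :=
          dvd_pow_self p (Nat.Prime.factorization_pos_of_dvd hp hn0 hpn).ne'
        have := (ZMod.natCast_eq_natCast_iff _ _ _).mpr (ha1.of_dvd hdvd)
        rw [this, ZMod.natCast_val, ZMod.cast_id]
      rw [hgp] at hcast
      have hu : g ^ (n - 1) = 1 := by
        ext
        push_cast
        exact hcast
      rw [← hord]
      exact orderOf_dvd_of_pow_eq_one hu
  · rintro ⟨hsf, hd⟩ a ha
    have key : ∀ p ∈ n.primeFactors, p ∣ (a ^ (n - 1) - 1).natAbs := by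
      intro p hp
      have hpp : p.Prime := Nat.prime_of_mem_primeFactors hp
      have hpn : p ∣ n := Nat.dvd_of_mem_primeFactors hp
      have hcop : IsCoprime a (p : ℤ) :=
        ha.of_isCoprime_of_dvd_right (Int.natCast_dvd_natCast.mpr hpn)
      have hferm := Int.ModEq.pow_card_sub_one_eq_one hpp hcop
      obtain ⟨c, hc⟩ := hd p hpp hpn
      have hmod : a ^ (n - 1) ≡ 1 [ZMOD (p : ℤ)] := by
        rw [hc, pow_mul]
        simpa using hferm.pow c
      have hdv : (p : ℤ) ∣ a ^ (n - 1) - 1 := Int.ModEq.dvd hmod.symm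
      simpa using Int.natAbs_dvd_natAbs.mpr hdv
    have hdvdn : n ∣ (a ^ (n - 1) - 1).natAbs := by
      have := Finset.prod_primes_dvd (s := n.primeFactors) ((a ^ (n - 1) - 1).natAbs)
        (fun p hp => (Nat.prime_of_mem_primeFactors hp).prime) key
      rwa [Nat.prod_primeFactors_of_squarefree hsf] at this
    have hfin : (n : ℤ) ∣ a ^ (n - 1) - 1 :=
      Int.dvd_natAbs.mp (Int.natCast_dvd_natCast.mpr hdvdn)
    exact (Int.modEq_iff_dvd.mpr hfin).symm
end

section
/- Every Carmichael number is squarefree: if n is a composite natural number such that a^(n−1) ≡ 1 (mod n) for every integer a coprime to n, then n is squarefree. -/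
lemma binom_sq (x : ℤ) : ∀ N : ℕ, (1 + x) ^ N ≡ 1 + N * x [ZMOD x ^ 2]
  | 0 => by simp
  | N + 1 => by
    have ih := binom_sq x N
    calc (1 + x) ^ (N + 1) = (1 + x) ^ N * (1 + x) := pow_succ _ _
      _ ≡ (1 + N * x) * (1 + x) [ZMOD x ^ 2] := ih.mul_right _
      _ ≡ 1 + (N + 1 : ℕ) * x [ZMOD x ^ 2] := by
          rw [Int.modEq_iff_dvd]
          exact ⟨-N, by push_cast; ring⟩

theorem carmichael_squarefree (n : ℕ) (hn : 2 ≤ n) (hcomp : ¬ n.Prime)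
    (hcar : ∀ a : ℤ, IsCoprime a (n : ℤ) → a ^ (n - 1) ≡ 1 [ZMOD (n : ℤ)]) :
    Squarefree n := by
  rw [Nat.squarefree_iff_prime_squarefree]
  intro p hp hp2
  have hn0 : n ≠ 0 := by omega
  set k := n.factorization p with hkdef
  have hk : 2 ≤ k := by
    have := (Nat.Prime.pow_dvd_iff_le_factorization hp hn0).mp (by rwa [pow_two])
    omega
  set t := n / p ^ k with htdef
  have hnt : p ^ k * t = n := Nat.ordProj_mul_ordCompl_eq_self n p
  have hpt : ¬ p ∣ t := Nat.not_dvd_ordCompl hp hn0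
  set m := p ^ (k - 1) * t with hmdef
  have hnm : p * m = n := by
    have hk1 : k - 1 + 1 = k := by omega
    rw [hmdef, ← hnt, ← mul_assoc, ← pow_succ', hk1]
  have hpm : p ∣ m := by
    rw [hmdef]
    exact Dvd.dvd.mul_right (dvd_pow_self p (by omega)) t
  -- coprimality of 1 + m with n
  have hcop : Nat.Coprime (1 + m) n := by
    rw [← hnm]
    apply Nat.Coprime.mul_right
    · have : ¬ p ∣ (1 + m) := by
        intro h
        have : p ∣ 1 := (Nat.dvd_add_right hpm).mp (by rwa [add_comm] at h)
        exact hp.one_lt.ne' (Nat.dvd_one.mp this)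
      exact ((hp.coprime_iff_not_dvd).mpr this).symm
    · simpa [Nat.add_comm] using Nat.coprime_succ_self m
  have hicop : IsCoprime ((1 + m : ℕ) : ℤ) (n : ℤ) := by
    rw [Nat.isCoprime_iff_coprime]; exact hcop
  have h1 := hcar _ hicop
  -- both congruences mod p^k
  have hpkn : ((p : ℤ) ^ k) ∣ (n : ℤ) := by
    exact_mod_cast (dvd_of_mul_right_eq t hnt).natCast
  have hpkm2 : ((p : ℤ) ^ k) ∣ ((m : ℤ)) ^ 2 := by
    have : (p : ℤ) ^ k ∣ ((p : ℤ) ^ (k - 1)) ^ 2 := by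
      rw [← pow_mul]
      exact pow_dvd_pow _ (by omega)
    calc (p : ℤ) ^ k ∣ ((p : ℤ) ^ (k - 1)) ^ 2 := this
      _ ∣ (m : ℤ) ^ 2 := by
          apply pow_dvd_pow_of_dvd
          exact_mod_cast (Dvd.intro t rfl : (p:ℕ)^(k-1) ∣ m).natCast
  have h2 : ((1 + m : ℕ) : ℤ) ^ (n - 1) ≡ 1 + (n - 1 : ℕ) * m [ZMOD ((p : ℤ) ^ k)] := by
    have := binom_sq (m : ℤ) (n - 1)
    push_cast at this ⊢
    exact (this.of_dvd hpkm2)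
  have h3 : ((1 + m : ℕ) : ℤ) ^ (n - 1) ≡ 1 [ZMOD ((p : ℤ) ^ k)] := h1.of_dvd hpkn
  have h4 : (1 : ℤ) + (n - 1 : ℕ) * m ≡ 1 [ZMOD ((p : ℤ) ^ k)] := h2.symm.trans h3
  have h5 : ((p : ℤ) ^ k) ∣ ((n - 1 : ℕ) : ℤ) * m := by
    have := h4.dvd
    rw [show (1:ℤ) - (1 + ((n - 1 : ℕ) : ℤ) * m) = -(((n - 1 : ℕ) : ℤ) * m) by ring] at this
    exact dvd_neg.mp this
  have h6 : p ^ k ∣ (n - 1) * m := by exact_mod_cast h5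
  have h7 : p ∣ (n - 1) * t := by
    have : p ^ k = p * p ^ (k - 1) := by rw [← pow_succ']; congr 1; omega
    rw [this, hmdef, show (n-1) * (p^(k-1) * t) = p^(k-1) * ((n-1)*t) by ring] at h6
    exact (mul_dvd_mul_iff_left (pow_ne_zero _ hp.pos.ne')).mp
      (by rwa [mul_comm p (p^(k-1))] at h6)
  rcases hp.dvd_mul.mp h7 with h | h
  · have hpn : p ∣ n := ⟨m, hnm.symm⟩
    have h1' := Nat.dvd_sub hpn h
    rw [Nat.sub_sub_self (by omega : 1 ≤ n)] at h1'
    exact hp.one_lt.ne' (Nat.dvd_one.mp h1')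
  · exact hpt h
end

section
/- Every Carmichael number has at least three distinct prime factors: if n is a composite natural number such that a^(n−1) ≡ 1 (mod n) for every integer a coprime to n, then the number of distinct prime divisors of n is at least 3. -/
lemma carm_lift (n p r : ℕ) (hn : 0 < n) (hp : p.Prime) (hr : r.Coprime p) :
    ∃ k : ℕ, k.Coprime n ∧ k ≡ r [MOD p ^ n.factorization p] := by
  have hco : Nat.Coprime (p ^ n.factorization p) (n / p ^ n.factorization p) :=
    Nat.Coprime.pow_left _ (Nat.coprime_ordCompl hp hn.ne')
  obtain ⟨k, hk1, hk2⟩ := Nat.chineseRemainder hco r 1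
  refine ⟨k, ?_, hk1⟩
  have hn' : p ^ n.factorization p * (n / p ^ n.factorization p) = n :=
    Nat.ordProj_mul_ordCompl_eq_self n p
  rw [← hn', Nat.coprime_mul_iff_right]
  constructor
  · have h1 : Nat.gcd k (p ^ n.factorization p) = Nat.gcd r (p ^ n.factorization p) :=
      hk1.gcd_eq
    rw [Nat.Coprime, h1]
    exact hr.pow_right _
  · have h2 : Nat.gcd k (n / p ^ n.factorization p) = Nat.gcd 1 (n / p ^ n.factorization p) :=
      hk2.gcd_eq
    rw [Nat.Coprime, h2, Nat.gcd_one_left]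

lemma one_add_pow_modEq (x : ℤ) (N : ℕ) : (1 + x) ^ N ≡ 1 + N * x [ZMOD x ^ 2] := by
  induction N with
  | zero => simp
  | succ N ih =>
    have h0 : ((N : ℤ)) * x ^ 2 ≡ 0 [ZMOD x ^ 2] :=
      (Int.modEq_zero_iff_dvd).mpr (dvd_mul_left _ _)
    calc (1 + x) ^ (N + 1) = (1 + x) ^ N * (1 + x) := pow_succ _ _
      _ ≡ (1 + N * x) * (1 + x) [ZMOD x ^ 2] := ih.mul_right _
      _ = 1 + (↑N + 1) * x + ↑N * x ^ 2 := by ring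
      _ ≡ 1 + (↑N + 1) * x + 0 [ZMOD x ^ 2] := (Int.ModEq.add_left _ h0)
      _ = 1 + (↑(N + 1) : ℤ) * x := by push_cast; ring

lemma carm_squarefree (n : ℕ) (hn : 2 ≤ n)
    (hcar : ∀ a : ℤ, IsCoprime a (n : ℤ) → a ^ (n - 1) ≡ 1 [ZMOD (n : ℤ)]) :
    Squarefree n := by
  rw [Nat.squarefree_iff_prime_squarefree]
  intro p hp hsq
  have hpn : p ∣ n := dvd_trans (dvd_mul_right p p) hsq
  have he2 : 2 ≤ n.factorization p := by
    rw [← Nat.Prime.pow_dvd_iff_le_factorization hp (by omega)]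
    simpa [sq] using hsq
  have hrp : (1 + p).Coprime p := by
    simpa [Nat.add_comm] using Nat.coprime_succ_self p
  obtain ⟨k, hk, hkr⟩ := carm_lift n p (1 + p) (by omega) hp hrp
  have hp2e : p ^ 2 ∣ p ^ n.factorization p := pow_dvd_pow p he2
  have hkr2 : k ≡ 1 + p [MOD p ^ 2] := hkr.of_dvd hp2e
  have hp2n : (p : ℤ) ^ 2 ∣ (n : ℤ) := by
    exact_mod_cast Int.natCast_dvd_natCast.mpr (hp2e.trans (Nat.ordProj_dvd n p))
  have hcong := hcar k (Nat.isCoprime_iff_coprime.mpr hk)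
  have hcong2 : (k : ℤ) ^ (n - 1) ≡ 1 [ZMOD (p : ℤ) ^ 2] :=
    hcong.of_dvd hp2n
  have hkr2' : (k : ℤ) ≡ 1 + p [ZMOD (p : ℤ) ^ 2] := by
    have := Int.natCast_modEq_iff.mpr hkr2
    simpa [sq] using this
  have hbin : (k : ℤ) ^ (n - 1) ≡ 1 + (n - 1 : ℕ) * p [ZMOD (p : ℤ) ^ 2] :=
    (hkr2'.pow _).trans (one_add_pow_modEq (p : ℤ) (n - 1))
  have hdvd : (p : ℤ) ^ 2 ∣ ((n - 1 : ℕ) : ℤ) * p := by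
    have := (hbin.symm.trans hcong2)
    have h' := this.dvd
    simpa using h'
  have hpdvd : (p : ℤ) ∣ ((n - 1 : ℕ) : ℤ) := by
    have hpne : (p : ℤ) ≠ 0 := by exact_mod_cast hp.ne_zero
    have : (p : ℤ) * p ∣ ((n - 1 : ℕ) : ℤ) * p := by rwa [← sq]
    exact (mul_dvd_mul_iff_right hpne).mp this
  have hpn1 : p ∣ n - 1 := by exact_mod_cast Int.natCast_dvd_natCast.mp hpdvd
  have : p ∣ 1 := by
    have := Nat.dvd_sub hpn hpn1
    simpa [Nat.sub_sub_self (by omega : 1 ≤ n)] using this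
  have := Nat.dvd_one.mp this
  have := hp.two_le
  omega

lemma carm_sub_one_dvd (n p : ℕ) (hn : 2 ≤ n) (hp : p.Prime) (hpn : p ∣ n)
    (hcar : ∀ a : ℤ, IsCoprime a (n : ℤ) → a ^ (n - 1) ≡ 1 [ZMOD (n : ℤ)]) :
    (p - 1) ∣ (n - 1) := by
  haveI : Fact p.Prime := ⟨hp⟩
  obtain ⟨g, hg⟩ := IsCyclic.exists_generator (α := (ZMod p)ˣ)
  have horder : orderOf g = p - 1 := by
    rw [orderOf_eq_card_of_forall_mem_zpowers hg, Nat.card_eq_fintype_card,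
      ZMod.card_units_eq_totient, Nat.totient_prime hp]
  have hr : ((g : ZMod p).val).Coprime p := ZMod.val_coe_unit_coprime g
  obtain ⟨k, hk, hkr⟩ := carm_lift n p (g : ZMod p).val (by omega) hp hr
  have he1 : p ∣ p ^ n.factorization p :=
    dvd_pow_self p (hp.factorization_pos_of_dvd (by omega) hpn).ne'
  have hkrp : k ≡ (g : ZMod p).val [MOD p] := hkr.of_dvd he1
  have hcong := hcar k (Nat.isCoprime_iff_coprime.mpr hk)
  have hcongp : (k : ℤ) ^ (n - 1) ≡ 1 [ZMOD (p : ℤ)] :=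
    hcong.of_dvd (Int.natCast_dvd_natCast.mpr hpn)
  -- move to ZMod p
  have hzk : ((k : ℤ) : ZMod p) ^ (n - 1) = 1 := by
    have := (ZMod.intCast_eq_intCast_iff _ _ _).mpr hcongp
    push_cast at this
    simpa using this
  have hkg : ((k : ℕ) : ZMod p) = (g : ZMod p) := by
    have := (ZMod.natCast_eq_natCast_iff _ _ _).mpr hkrp
    rwa [ZMod.natCast_val, ZMod.cast_id] at this
  have hgpow : (g : ZMod p) ^ (n - 1) = 1 := by
    rw [← hkg]
    push_cast at hzk
    exact hzk
  have hgu : g ^ (n - 1) = 1 := by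
    ext
    push_cast
    exact hgpow
  have := orderOf_dvd_of_pow_eq_one hgu
  rwa [horder] at this

theorem carmichael_three_prime_factors (n : ℕ) (hn : 2 ≤ n) (hcomp : ¬ n.Prime)
    (hcar : ∀ a : ℤ, IsCoprime a (n : ℤ) → a ^ (n - 1) ≡ 1 [ZMOD (n : ℤ)]) :
    3 ≤ n.primeFactors.card := by
  have hsf : Squarefree n := carm_squarefree n hn hcar
  have hprod : ∏ p ∈ n.primeFactors, p = n := Nat.prod_primeFactors_of_squarefree hsf
  by_contra hlt
  push_neg at hlt
  interval_cases h : n.primeFactors.card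
  · -- card = 0
    have : n.primeFactors = ∅ := Finset.card_eq_zero.mp h
    rw [this] at hprod
    simp at hprod
    omega
  · -- card = 1
    obtain ⟨p, hpset⟩ := Finset.card_eq_one.mp h
    have hpmem : p ∈ n.primeFactors := by rw [hpset]; simp
    have hpp : p.Prime := Nat.prime_of_mem_primeFactors hpmem
    rw [hpset, Finset.prod_singleton] at hprod
    exact hcomp (hprod ▸ hpp)
  · -- card = 2
    obtain ⟨p, q, hpq, hset⟩ := Finset.card_eq_two.mp h
    have hpmem : p ∈ n.primeFactors := by rw [hset]; simp
    have hqmem : q ∈ n.primeFactors := by rw [hset]; simp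
    have hpp : p.Prime := Nat.prime_of_mem_primeFactors hpmem
    have hqp : q.Prime := Nat.prime_of_mem_primeFactors hqmem
    rw [hset, Finset.prod_pair hpq] at hprod
    -- wlog p < q
    rcases lt_or_gt_of_ne hpq with hlt' | hlt'
    · exact absurd (carm_sub_one_dvd n q hn hqp (hprod ▸ dvd_mul_left q p) hcar)
        (by
          intro hdvd
          have hA := hpp.two_le; have hB := hqp.two_le
          have hm : p * q = n := hprod
          have hmul : (q - 1) * p = q * p - p := by
            rw [Nat.sub_mul, one_mul]
          have hqp' : q * p = n := by rw [Nat.mul_comm]; exact hprod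
          have hple : p ≤ n := by
            rw [← hqp']; exact Nat.le_mul_of_pos_left p (by omega)
          have h1 : n - 1 = (q - 1) * p + (p - 1) := by
            rw [hmul, hqp']; omega
          have h2 : (q - 1) ∣ (p - 1) := by
            have hx := Nat.dvd_sub hdvd (dvd_mul_right (q - 1) p)
            rw [h1, Nat.add_sub_cancel_left] at hx
            exact hx
          have := Nat.le_of_dvd (by omega) h2
          omega)
    · exact absurd (carm_sub_one_dvd n p hn hpp (hprod ▸ dvd_mul_right p q) hcar)
        (by
          intro hdvd
          have hA := hpp.two_le; have hB := hqp.two_le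
          have hm : p * q = n := hprod
          have hmul : (p - 1) * q = p * q - q := by
            rw [Nat.sub_mul, one_mul]
          have hqle : q ≤ n := by
            rw [← hm]; exact Nat.le_mul_of_pos_left q (by omega)
          have h1 : n - 1 = (p - 1) * q + (q - 1) := by
            rw [hmul, hm]; omega
          have h2 : (p - 1) ∣ (q - 1) := by
            have hx := Nat.dvd_sub hdvd (dvd_mul_right (p - 1) q)
            rw [h1, Nat.add_sub_cancel_left] at hx
            exact hx
          have := Nat.le_of_dvd (by omega) h2
          omega)
end

section
/- (Correctness of the Erdős construction, step 5 of Algorithm 3) Let Λ be a positive integer and let S be a finite set of prime numbers such that for every p ∈ S, (p−1) divides Λ and p does not divide Λ. If |S| ≥ 2 and ∏_{p∈S} p ≡ 1 (mod Λ), then N = ∏_{p∈S} p is a Carmichael number, i.e. N is composite and a^(N−1) ≡ 1 (mod N) for every integer a coprime to N. -/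
theorem erdos_construction_carmichael (Λ : ℕ) (hΛ : 0 < Λ)
    (S : Finset ℕ) (hprime : ∀ p ∈ S, p.Prime)
    (hdvd : ∀ p ∈ S, (p - 1) ∣ Λ) (hndvd : ∀ p ∈ S, ¬ p ∣ Λ)
    (hcard : 2 ≤ S.card)
    (hprod : (∏ p ∈ S, p) ≡ 1 [MOD Λ]) :
    2 ≤ ∏ p ∈ S, p ∧ ¬ (∏ p ∈ S, p).Prime ∧
      ∀ a : ℤ, IsCoprime a ((∏ p ∈ S, p : ℕ) : ℤ) →
        a ^ ((∏ p ∈ S, p) - 1) ≡ 1 [ZMOD ((∏ p ∈ S, p : ℕ) : ℤ)] := by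
  set N := ∏ p ∈ S, p with hN
  -- get two distinct primes
  obtain ⟨p, hp, q, hq, hpq⟩ := Finset.one_lt_card.mp (by omega : 1 < S.card)
  have hfac : N = p * ∏ r ∈ S.erase p, r := (Finset.mul_prod_erase S _ hp).symm
  have hq' : q ∈ S.erase p := Finset.mem_erase.mpr ⟨fun h => hpq h.symm, hq⟩
  have hrest_pos : 0 < ∏ r ∈ S.erase p, r := by
    apply Finset.prod_pos
    intro r hr
    exact (hprime r (Finset.mem_of_mem_erase hr)).pos
  have hrest2 : 2 ≤ ∏ r ∈ S.erase p, r := by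
    have := Finset.dvd_prod_of_mem id hq'
    have hq2 := (hprime q hq).two_le
    exact le_trans hq2 (Nat.le_of_dvd hrest_pos this)
  have hp2 := (hprime p hp).two_le
  have hN2 : 2 ≤ N := by
    rw [hfac]; nlinarith
  refine ⟨hN2, ?_, ?_⟩
  · intro hNp
    rcases (hNp.eq_one_or_self_of_dvd p ⟨_, hfac⟩) with h | h
    · omega
    · rw [hfac] at h; nlinarith
  · intro a ha
    have hdvdp : ∀ r ∈ S, (r : ℤ) ∣ a ^ (N - 1) - 1 := by
      intro r hr
      have hrp := hprime r hr
      have hrdvdN : (r : ℕ) ∣ N := Finset.dvd_prod_of_mem id hr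
      have har : IsCoprime a (r : ℤ) :=
        ha.of_isCoprime_of_dvd_right (Int.natCast_dvd_natCast.mpr hrdvdN)
      have hferm : a ^ (r - 1) ≡ 1 [ZMOD r] :=
        Int.ModEq.pow_card_sub_one_eq_one hrp har
      -- (r - 1) ∣ N - 1
      have hmod : N ≡ 1 [MOD (r - 1)] := hprod.of_dvd (hdvd r hr)
      have h1N : 1 ≤ N := by omega
      have hdv : (r - 1) ∣ N - 1 := (Nat.modEq_iff_dvd' h1N).mp hmod.symm
      obtain ⟨k, hk⟩ := hdv
      have : a ^ (N - 1) ≡ 1 [ZMOD r] := by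
        rw [hk, pow_mul]
        calc (a ^ (r-1)) ^ k ≡ 1 ^ k [ZMOD r] := hferm.pow k
          _ = 1 := one_pow k
      exact Int.ModEq.dvd this.symm
    have hcop : (↑S : Set ℕ).Pairwise (Function.onFun IsCoprime fun r => (r : ℤ)) := by
      intro x hx y hy hxy
      simp only [Function.onFun]
      rw [Int.isCoprime_iff_gcd_eq_one]
      exact_mod_cast (Nat.coprime_primes (hprime x hx) (hprime y hy)).mpr hxy
    have hNdvd : (N : ℤ) ∣ a ^ (N - 1) - 1 := by
      have := Finset.prod_dvd_of_coprime hcop hdvdp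
      rwa [← Nat.cast_prod] at this
    exact (Int.modEq_iff_dvd.mpr hNdvd).symm
end

section
/- (Correctness of step 8 of Algorithm 3) Let Λ be a positive integer and let P be a finite set of prime numbers such that for every p ∈ P, (p−1) divides Λ and p does not divide Λ. Let T ⊆ P satisfy ∏_{p∈T} p ≡ ∏_{p∈P} p (mod Λ) and |P∖T| ≥ 2. Then N = ∏_{p∈P∖T} p is a Carmichael number, i.e. N is composite and a^(N−1) ≡ 1 (mod N) for every integer a coprime to N. -/
theorem erdos_construction_carmichael_complement (Λ : ℕ) (hΛ : 0 < Λ)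
    (P : Finset ℕ) (hprime : ∀ p ∈ P, p.Prime)
    (hdvd : ∀ p ∈ P, (p - 1) ∣ Λ) (hndvd : ∀ p ∈ P, ¬ p ∣ Λ)
    (T : Finset ℕ) (hT : T ⊆ P)
    (hprod : (∏ p ∈ T, p) ≡ (∏ p ∈ P, p) [MOD Λ])
    (hcard : 2 ≤ (P \ T).card) :
    2 ≤ ∏ p ∈ P \ T, p ∧ ¬ (∏ p ∈ P \ T, p).Prime ∧
      ∀ a : ℤ, IsCoprime a ((∏ p ∈ P \ T, p : ℕ) : ℤ) →
        a ^ ((∏ p ∈ P \ T, p) - 1) ≡ 1 [ZMOD ((∏ p ∈ P \ T, p : ℕ) : ℤ)] := by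
  set N := ∏ p ∈ P \ T, p with hN
  have hsub : P \ T ⊆ P := Finset.sdiff_subset
  have hNprimes : ∀ p ∈ P \ T, p.Prime := fun p hp => hprime p (hsub hp)
  obtain ⟨p, hp, q, hq, hpq⟩ := Finset.one_lt_card.mp hcard
  have hpd : p ∣ N := Finset.dvd_prod_of_mem _ hp
  have hqd : q ∣ N := Finset.dvd_prod_of_mem _ hq
  have hNpos : 0 < N := Finset.prod_pos fun r hr => (hNprimes r hr).pos
  have h2N : 2 ≤ N := le_trans (hNprimes p hp).two_le (Nat.le_of_dvd hNpos hpd)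
  refine ⟨h2N, ?_, ?_⟩
  · intro hNp
    have h1 := (Nat.prime_dvd_prime_iff_eq (hNprimes p hp) hNp).mp hpd
    have h2 := (Nat.prime_dvd_prime_iff_eq (hNprimes q hq) hNp).mp hqd
    exact hpq (h1.trans h2.symm)
  · have hcop : Nat.Coprime (∏ r ∈ T, r) Λ :=
      Nat.Coprime.prod_left fun r hr =>
        ((hprime r (hT hr)).coprime_iff_not_dvd.mpr (hndvd r (hT hr)))
    have hsplit : N * ∏ r ∈ T, r = ∏ r ∈ P, r := Finset.prod_sdiff hT
    have h1 : 1 ≡ N [MOD Λ] := by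
      have h : 1 * ∏ r ∈ T, r ≡ N * ∏ r ∈ T, r [MOD Λ] := by
        rw [one_mul, hsplit]; exact hprod
      exact Nat.ModEq.cancel_right_of_coprime (Nat.coprime_comm.mp hcop) h
    have hΛd : Λ ∣ N - 1 := (Nat.modEq_iff_dvd' (by omega)).mp h1
    intro a ha
    have key : ((N : ℕ) : ℤ) ∣ a ^ (N - 1) - 1 := by
      have hcast : ((N : ℕ) : ℤ) = ∏ r ∈ P \ T, (r : ℤ) := Nat.cast_prod _ _
      rw [hcast]
      apply Finset.prod_dvd_of_coprime
      · intro x hx y hy hxy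
        exact Nat.isCoprime_iff_coprime.mpr
          ((Nat.coprime_primes (hNprimes x hx) (hNprimes y hy)).mpr hxy)
      · intro r hr
        haveI : Fact (r.Prime) := ⟨hNprimes r hr⟩
        have hrd : (r : ℕ) ∣ N := Finset.dvd_prod_of_mem _ hr
        have har : IsCoprime a (r : ℤ) :=
          ha.of_isCoprime_of_dvd_right (Int.natCast_dvd_natCast.mpr hrd)
        have hane : (a : ZMod r) ≠ 0 := by
          rw [Ne, ZMod.intCast_zmod_eq_zero_iff_dvd]
          intro hdvd
          have hu : IsUnit ((r : ℤ)) := har.isUnit_of_dvd' hdvd dvd_rfl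
          have := Int.isUnit_iff.mp hu
          have h2r := (hNprimes r hr).two_le
          omega
        have hfer : (a : ZMod r) ^ (r - 1) = 1 := ZMod.pow_card_sub_one_eq_one hane
        obtain ⟨k, hk⟩ := (hdvd r (hsub hr)).trans hΛd
        have hpow : (a : ZMod r) ^ (N - 1) = 1 := by
          rw [hk, pow_mul, hfer, one_pow]
        have hz : ((a ^ (N - 1) - 1 : ℤ) : ZMod r) = 0 := by
          push_cast
          rw [hpow]; ring
        exact (ZMod.intCast_zmod_eq_zero_iff_dvd _ r).mp hz
    exact (Int.modEq_iff_dvd.mpr key).symm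
end

section
/- (Correctness of Naccache–Stern decryption) Let p be a prime, n a natural number, and p₀ < p₁ < ... < pₙ the first n+1 prime numbers, with ∏_{i=0}^{n} pᵢ < p. Let s be a positive integer coprime to p−1 and let u₀,...,uₙ ∈ (ℤ/pℤ)^× satisfy uᵢ^s = pᵢ in ℤ/pℤ. Let m < 2^{n+1} be a natural number with binary digits m₀,...,mₙ (m = Σ_{i=0}^{n} 2^i mᵢ, mᵢ ∈ {0,1}), and set c = ∏_{i=0}^{n} uᵢ^{mᵢ} in ℤ/pℤ. Then Σ_{i=0}^{n} (2^i/(pᵢ−1)) · (gcd(pᵢ, c^s mod p) − 1) = m, where c^s mod p denotes the representative of c^s in {0,1,...,p−1}. -/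
private lemma sum_testBit (m : ℕ) : ∀ k, (∑ i ∈ Finset.range k,
    (if m.testBit i then 2 ^ i else 0)) = m % 2 ^ k := by
  intro k
  induction k with
  | zero => simp [Nat.mod_one]
  | succ k ih =>
      rw [Finset.sum_range_succ, ih]
      have hq := Nat.div_add_mod m (2 ^ k)
      have hq2 := Nat.div_add_mod (m / 2 ^ k) 2
      have htb : m.testBit k = decide (m / 2 ^ k % 2 = 1) := Nat.testBit_eq_decide_div_mod_eq
      have hrlt : m % 2 ^ k < 2 ^ k := Nat.mod_lt _ (Nat.pow_pos (n := k) (by norm_num))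
      have key : m % 2 ^ (k + 1) = 2 ^ k * (m / 2 ^ k % 2) + m % 2 ^ k := by
        have h1 : m % 2 ^ (k + 1) % 2 ^ k = m % 2 ^ k :=
          Nat.mod_mod_of_dvd m (pow_dvd_pow 2 (Nat.le_succ k))
        have h2 : m % 2 ^ (k + 1) / 2 ^ k = m / 2 ^ k % 2 := by
          rw [pow_succ]; exact Nat.mod_mul_right_div_self m (2 ^ k) 2
        conv_lhs => rw [← Nat.div_add_mod (m % 2 ^ (k + 1)) (2 ^ k)]
        rw [h1, h2]
      rw [key]
      by_cases h : m.testBit k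
      · rw [htb, decide_eq_true_eq] at h
        simp [h, htb]
        omega
      · rw [htb, decide_eq_true_eq] at h
        have h2 : m / 2 ^ k % 2 < 2 := Nat.mod_lt _ (by norm_num)
        have : m / 2 ^ k % 2 = 0 := by omega
        simp [htb, this]

theorem naccache_stern_decryption (p : ℕ) (hp : p.Prime) (n : ℕ)
    (hlt : ∏ i ∈ Finset.range (n + 1), Nat.nth Nat.Prime i < p)
    (s : ℕ) (hs : 0 < s) (hcop : Nat.Coprime s (p - 1))
    (u : ℕ → ZMod p)
    (hu : ∀ i ∈ Finset.range (n + 1), u i ^ s = (Nat.nth Nat.Prime i : ZMod p))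
    (m : ℕ) (hm : m < 2 ^ (n + 1))
    (c : ZMod p)
    (hc : c = ∏ i ∈ Finset.range (n + 1), u i ^ (if m.testBit i then 1 else 0)) :
    ∑ i ∈ Finset.range (n + 1),
        ((2 ^ i : ℚ) / ((Nat.nth Nat.Prime i : ℚ) - 1)) *
          ((Nat.gcd (Nat.nth Nat.Prime i) ((c ^ s).val) : ℚ) - 1) = (m : ℚ) := by
  haveI : Fact p.Prime := ⟨hp⟩
  set N : ℕ := ∏ i ∈ Finset.range (n + 1),
      Nat.nth Nat.Prime i ^ (if m.testBit i then 1 else 0) with hN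
  -- c ^ s = N in ZMod p
  have hcs : c ^ s = (N : ZMod p) := by
    rw [hc, ← Finset.prod_pow, Nat.cast_prod]
    apply Finset.prod_congr rfl
    intro i hi
    rw [← pow_mul, mul_comm, pow_mul, hu i hi, Nat.cast_pow]
  -- N < p
  have hNlt : N < p := by
    calc N ≤ ∏ i ∈ Finset.range (n + 1), Nat.nth Nat.Prime i := by
            apply Finset.prod_le_prod'
            intro i _
            by_cases h : m.testBit i <;> simp [h, (Nat.prime_nth_prime i).one_lt.le]
      _ < p := hlt
  have hval : (c ^ s).val = N := by
    rw [hcs, ZMod.val_natCast, Nat.mod_eq_of_lt hNlt]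
  -- gcd computation
  have hgcd : ∀ i ∈ Finset.range (n + 1),
      Nat.gcd (Nat.nth Nat.Prime i) N = if m.testBit i then Nat.nth Nat.Prime i else 1 := by
    intro i hi
    by_cases h : m.testBit i
    · have hdvd : Nat.nth Nat.Prime i ∣ N := by
        exact dvd_trans (by simp [h])
          (Finset.dvd_prod_of_mem
            (fun j => Nat.nth Nat.Prime j ^ (if m.testBit j then 1 else 0)) hi)
      simp [h, Nat.gcd_eq_left hdvd]
    · have hndvd : ¬ Nat.nth Nat.Prime i ∣ N := by
        rw [hN, Prime.dvd_finset_prod_iff (Nat.prime_nth_prime i).prime _]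
        rintro ⟨j, hj, hdj⟩
        by_cases h2 : m.testBit j
        · simp only [h2, if_true, pow_one] at hdj
          have heq : Nat.nth Nat.Prime i = Nat.nth Nat.Prime j :=
            ((Nat.prime_dvd_prime_iff_eq (Nat.prime_nth_prime i) (Nat.prime_nth_prime j)).mp hdj)
          have : i = j := Nat.nth_injective Nat.infinite_setOf_prime heq
          subst this
          exact h h2
        · simp only [h2, if_false, pow_zero] at hdj
          exact (Nat.prime_nth_prime i).one_lt.ne' (Nat.eq_one_of_dvd_one hdj)
      simp [h, Nat.Coprime, ((Nat.prime_nth_prime i).coprime_iff_not_dvd).mpr hndvd]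
  -- rewrite sum
  rw [hval]
  have hterm : ∀ i ∈ Finset.range (n + 1),
      ((2 ^ i : ℚ) / ((Nat.nth Nat.Prime i : ℚ) - 1)) *
        ((Nat.gcd (Nat.nth Nat.Prime i) N : ℚ) - 1)
      = (if m.testBit i then (2 ^ i : ℚ) else 0) := by
    intro i hi
    rw [hgcd i hi]
    have h2 : (2 : ℚ) ≤ (Nat.nth Nat.Prime i : ℚ) := by
      exact_mod_cast (Nat.prime_nth_prime i).two_le
    by_cases h : m.testBit i
    · have hx : (Nat.nth Nat.Prime i : ℚ) - 1 ≠ 0 := by linarith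
      simp only [h, if_true]
      rw [div_mul_cancel₀ _ hx]
    · simp [h]
  rw [Finset.sum_congr rfl hterm]
  have := sum_testBit m (n + 1)
  rw [Nat.mod_eq_of_lt hm] at this
  calc (∑ i ∈ Finset.range (n + 1), if m.testBit i then (2 ^ i : ℚ) else 0)
      = ((∑ i ∈ Finset.range (n + 1), if m.testBit i then 2 ^ i else 0 : ℕ) : ℚ) := by
        push_cast [apply_ite (Nat.cast : ℕ → ℚ)]
        rfl
    _ = (m : ℚ) := by rw [this]
end

section
/- (Lemma 3.4, Hamming weight part) Let n be a natural number and let m be a natural number with 2^n ≤ m < 2^{n+1}. Then the Hamming weight (number of ones in the binary expansion) of m' = 2^{n+1} + 2^n − m − 1 equals n + 2 − H(m), where H(m) is the Hamming weight of m. In particular, if H(m) = n + 1 − ε then H(m') = ε + 1. -/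
lemma hsplit (r : ℕ) :
    (Nat.digits 2 r).sum = r % 2 + (Nat.digits 2 (r / 2)).sum := by
  rcases Nat.eq_zero_or_pos r with h | h
  · simp [h]
  · rw [Nat.digits_def' (by norm_num : 1 < 2) h]
    simp [List.sum_cons]

lemma hsum_le : ∀ n r : ℕ, r < 2 ^ n → (Nat.digits 2 r).sum ≤ n := by
  intro n r hr
  rcases Nat.eq_zero_or_pos r with h | h
  · simp [h]
  have hlen : (Nat.digits 2 r).length ≤ n := by
    by_contra hc
    push_neg at hc
    have h1 := Nat.base_pow_length_digits_le 2 r (by norm_num) (by omega)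
    have h2 : 2 ^ (n + 1) ≤ 2 * r :=
      le_trans (Nat.pow_le_pow_right (by norm_num) hc) h1
    have h3 : 2 ^ (n + 1) = 2 * 2 ^ n := by ring
    omega
  calc (Nat.digits 2 r).sum ≤ (Nat.digits 2 r).length * 1 := by
        apply List.sum_le_card_nsmul
        intro x hx
        have := Nat.digits_lt_base (by norm_num) hx
        omega
    _ ≤ n := by omega

lemma lemA : ∀ n r : ℕ, r < 2 ^ n →
    (Nat.digits 2 (2 ^ n + r)).sum = (Nat.digits 2 r).sum + 1 := by
  intro n
  induction n with
  | zero => intro r hr; interval_cases r; simp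
  | succ n ih =>
    intro r hr
    have h1 : 2 ^ (n + 1) + r = 2 * (2 ^ n + r / 2) + r % 2 := by
      have := Nat.div_add_mod r 2; ring_nf; omega
    have h2 : r / 2 < 2 ^ n := by
      have : 2 ^ (n + 1) = 2 * 2 ^ n := by ring
      omega
    rw [h1]
    have h3 : 2 * (2 ^ n + r / 2) + r % 2 = ((2 ^ n + r / 2) * 2 + r % 2) := by ring
    rw [h3, hsplit]
    have hd : ((2 ^ n + r / 2) * 2 + r % 2) / 2 = 2 ^ n + r / 2 := by omega
    have hm : ((2 ^ n + r / 2) * 2 + r % 2) % 2 = r % 2 := by omega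
    rw [hd, hm, ih _ h2, hsplit r]
    omega

lemma lemB : ∀ n r : ℕ, r < 2 ^ n →
    (Nat.digits 2 (2 ^ n - 1 - r)).sum = n - (Nat.digits 2 r).sum := by
  intro n
  induction n with
  | zero => intro r hr; interval_cases r; simp
  | succ n ih =>
    intro r hr
    have h2 : r / 2 < 2 ^ n := by
      have : 2 ^ (n + 1) = 2 * 2 ^ n := by ring
      omega
    have h1 : 2 ^ (n + 1) - 1 - r = (2 ^ n - 1 - r / 2) * 2 + (1 - r % 2) := by
      have e : 2 ^ (n + 1) = 2 * 2 ^ n := by ring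
      have := Nat.div_add_mod r 2
      have hp : 1 ≤ 2 ^ n := Nat.one_le_two_pow
      omega
    rw [h1, hsplit]
    have hd : ((2 ^ n - 1 - r / 2) * 2 + (1 - r % 2)) / 2 = 2 ^ n - 1 - r / 2 := by omega
    have hm : ((2 ^ n - 1 - r / 2) * 2 + (1 - r % 2)) % 2 = 1 - r % 2 := by omega
    rw [hd, hm, ih _ h2]
    have hle := hsum_le n (r / 2) h2
    rw [hsplit r]
    omega

theorem complement_message_hamming_weight (n m : ℕ)
    (hm₁ : 2 ^ n ≤ m) (hm₂ : m < 2 ^ (n + 1)) :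
    (Nat.digits 2 (2 ^ (n + 1) + 2 ^ n - m - 1)).sum =
        n + 2 - (Nat.digits 2 m).sum ∧
      ∀ ε : ℕ, (Nat.digits 2 m).sum = n + 1 - ε → ε ≤ n →
        (Nat.digits 2 (2 ^ (n + 1) + 2 ^ n - m - 1)).sum = ε + 1 := by
  set r := m - 2 ^ n with hr
  have hms : m = 2 ^ n + r := by omega
  have hrlt : r < 2 ^ n := by
    have : 2 ^ (n + 1) = 2 * 2 ^ n := by ring
    omega
  have hrle : r + 1 ≤ 2 ^ n := hrlt
  have key : 2 ^ (n + 1) + 2 ^ n - m - 1 = 2 ^ n + (2 ^ n - 1 - r) := by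
    have : 2 ^ (n + 1) = 2 * 2 ^ n := by ring
    omega
  have h1 : 2 ^ n - 1 - r < 2 ^ n := by omega
  have hle := hsum_le n r hrlt
  have hm' : (Nat.digits 2 (2 ^ (n + 1) + 2 ^ n - m - 1)).sum
      = (n - (Nat.digits 2 r).sum) + 1 := by
    rw [key, lemA n _ h1, lemB n r hrlt]
  have hmm : (Nat.digits 2 m).sum = (Nat.digits 2 r).sum + 1 := by
    rw [hms, lemA n r hrlt]
  constructor
  · omega
  · intro ε h hε; omega
end
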